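/- (Corollary 3.5.) One has dβ(ξ) = 0, Ric(X, ξ) = −2n(α₀² + β₀²)η(X) for every X ∈ V, and Qξ = −2n(α₀² + β₀²)ξ. -/

import Mathlib

open LinearMap

lemma trace_smulRight' {V : Type*} [AddCommGroup V] [Module ℝ V] [FiniteDimensional ℝ V]
    (f : V →ₗ[ℝ] ℝ) (v : V) :
    LinearMap.trace ℝ V (f.smulRight v) = f v := by
  have h1 : f.smulRight v = (LinearMap.toSpanSingleton ℝ V v) ∘ₗ f := by
    ext x; simp [LinearMap.toSpanSingleton, mul_comm]
  rw [h1, LinearMap.trace_comp_comm']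
  have h2 : f ∘ₗ (LinearMap.toSpanSingleton ℝ V v) = (f v) • LinearMap.id := by
    ext; simp [LinearMap.toSpanSingleton, mul_comm]
  rw [h2, map_smul, LinearMap.trace_id]
  simp

lemma trace_skew_zero {V : Type*} [AddCommGroup V] [Module ℝ V] [FiniteDimensional ℝ V]
    (g : LinearMap.BilinForm ℝ V) (hg : g.Nondegenerate) (φ : V →ₗ[ℝ] V)
    (hskew : ∀ X Y : V, g (φ X) Y = - g X (φ Y)) :
    LinearMap.trace ℝ V φ = 0 := by
  set e := g.toDual hg with he
  have hconj : Module.Dual.transpose (R := ℝ) φ = e.conj (-φ) := by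
    apply LinearMap.ext; intro f
    have hf : f = e (e.symm f) := (e.apply_symm_apply f).symm
    apply LinearMap.ext; intro X
    rw [LinearEquiv.conj_apply_apply]
    rw [hf]
    simp only [LinearEquiv.symm_apply_apply]
    show (e (e.symm f)) (φ X) = (e ((-φ) (e.symm f))) X
    have h1 : ∀ m n : V, e m n = g m n := fun m n => rfl
    rw [h1, h1]
    simp only [LinearMap.neg_apply, map_neg, LinearMap.neg_apply]
    rw [hskew]
    ring
  have := LinearMap.trace_transpose' (R := ℝ) φ
  rw [hconj, LinearMap.trace_conj', map_neg] at this
  linarith [this]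

/-- The Ricci tensor: `Ric R Y Z` is the trace of the linear map `X ↦ R X Y Z`. -/
noncomputable def Ric {V : Type*} [AddCommGroup V] [Module ℝ V]
    (R : V →ₗ[ℝ] V →ₗ[ℝ] V →ₗ[ℝ] V) (Y Z : V) : ℝ :=
  LinearMap.trace ℝ V ((LinearMap.applyₗ Z).comp (R.flip Y))

theorem stmt_8
    (n : ℕ) (hn : 1 ≤ n)
    (V : Type*) [AddCommGroup V] [Module ℝ V] [FiniteDimensional ℝ V]
    (hdim : Module.finrank ℝ V = 2 * n + 1)
    (g : LinearMap.BilinForm ℝ V)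
    (hg_symm : ∀ X Y : V, g X Y = g Y X)
    (hg_nondeg : g.Nondegenerate)
    (φ : V →ₗ[ℝ] V) (ξ : V) (η : V →ₗ[ℝ] ℝ)
    (hφξ : φ ξ = 0) (hηφ : ∀ X : V, η (φ X) = 0)
    (hηξ : η ξ = 1) (hφ2 : ∀ X : V, φ (φ X) = X - η X • ξ)
    (hgφ : ∀ X Y : V, g (φ X) (φ Y) = - g X Y + η X * η Y)
    (R : V →ₗ[ℝ] V →ₗ[ℝ] V →ₗ[ℝ] V)
    (hR_a1 : ∀ X Y Z W : V, g (R X Y Z) W = - g (R Y X Z) W)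
    (hR_a2 : ∀ X Y Z W : V, g (R X Y Z) W = - g (R X Y W) Z)
    (hR_pair : ∀ X Y Z W : V, g (R X Y Z) W = g (R Z W X) Y)
    (α₀ β₀ : ℝ) (dα dβ : V →ₗ[ℝ] ℝ)
    (hTPS : ∀ X Y : V, R X Y ξ =
      -((α₀ ^ 2 + β₀ ^ 2) • (η Y • X - η X • Y))
      - (2 * α₀ * β₀) • (η Y • φ X - η X • φ Y)
      - dα X • φ Y + dα Y • φ X + dβ Y • φ (φ X) - dβ X • φ (φ Y))
    (Qop : V →ₗ[ℝ] V) (hQ : ∀ X Y : V, g (Qop X) Y = Ric R X Y)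
    (scal : ℝ) (hscal : scal = LinearMap.trace ℝ V Qop)
    (A B : V) (hA : ∀ X : V, g A X = dα X) (hB : ∀ X : V, g B X = dβ X)
    (hgrad : φ A = -((2 * (n : ℝ) - 1) • B))
    :
    dβ ξ = 0 ∧
    (∀ X : V, Ric R X ξ = -(2 * (n : ℝ) * (α₀ ^ 2 + β₀ ^ 2)) * η X) ∧
    Qop ξ = -(2 * (n : ℝ) * (α₀ ^ 2 + β₀ ^ 2)) • ξ := by
  have hgξ : ∀ X : V, g X ξ = η X := by
    intro X
    have h := hgφ X ξ
    rw [hφξ, hηξ] at h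
    simp at h
    linarith
  have hξg : ∀ X : V, g ξ X = η X := fun X => by rw [hg_symm, hgξ]
  have hskew : ∀ X Y : V, g (φ X) Y = - g X (φ Y) := by
    intro X Y
    have h := hgφ X (φ Y)
    rw [hφ2, hηφ] at h
    simp only [map_sub, map_smul, smul_eq_mul, hgξ, hηφ, mul_zero, sub_zero] at h
    linarith
  have htφ : LinearMap.trace ℝ V φ = 0 := trace_skew_zero g hg_nondeg φ hskew
  have hge1 : (1:ℝ) ≤ (n:ℝ) := by exact_mod_cast hn
  have hηB : η B = 0 := by
    have h := congrArg η hgrad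
    rw [hηφ] at h
    simp only [map_neg, map_smul, smul_eq_mul] at h
    have hne : (2*(n:ℝ) - 1) ≠ 0 := by intro h0; linarith
    have : (2*(n:ℝ) - 1) * η B = 0 := by linarith
    rcases mul_eq_zero.mp this with h' | h'
    · exact absurd h' hne
    · exact h'
  have hdβξ : dβ ξ = 0 := by rw [← hB, hgξ, hηB]
  have hdαφ : ∀ Y : V, dα (φ Y) = (2*(n:ℝ)-1) * dβ Y := by
    intro Y
    have h := hskew A Y
    rw [hgrad] at h
    simp only [map_neg, map_smul, LinearMap.neg_apply, LinearMap.smul_apply, smul_eq_mul,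
      neg_neg] at h
    rw [hA, hB] at h
    linarith
  have hφ2g : ∀ u v : V, g (φ (φ u)) v = g u v - η u * η v := by
    intro u v
    rw [hφ2]
    simp [map_sub, map_smul, LinearMap.sub_apply, LinearMap.smul_apply, smul_eq_mul, hξg]
  have hdβφ2 : ∀ Y : V, dβ (φ (φ Y)) = dβ Y := by
    intro Y; rw [hφ2]; simp [hdβξ]
  have htφ2 : LinearMap.trace ℝ V (φ ∘ₗ φ) = 2*(n:ℝ) := by
    have hc : φ ∘ₗ φ = LinearMap.id - η.smulRight ξ := by
      ext X; simp [hφ2 X]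
    rw [hc, map_sub, LinearMap.trace_id, trace_smulRight', hηξ, hdim]
    push_cast; ring
  have hRic : ∀ Y : V, Ric R Y ξ = -(2*(n:ℝ)*(α₀^2+β₀^2)) * η Y := by
    intro Y
    have hL : (LinearMap.applyₗ (R := ℝ) ξ).comp (R.flip Y)
        = -((α₀^2+β₀^2) • (η Y • (LinearMap.id : V →ₗ[ℝ] V) - η.smulRight Y))
          - (2*α₀*β₀) • (η Y • φ - η.smulRight (φ Y))
          - dα.smulRight (φ Y) + dα Y • φ + dβ Y • (φ ∘ₗ φ) - dβ.smulRight (φ (φ Y)) := by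
      ext X
      simp only [LinearMap.comp_apply, LinearMap.applyₗ_apply_apply, LinearMap.flip_apply,
        LinearMap.add_apply, LinearMap.sub_apply, LinearMap.neg_apply, LinearMap.smul_apply,
        LinearMap.smulRight_apply, LinearMap.id_coe, id_eq, LinearMap.coe_comp,
        Function.comp_apply]
      rw [hTPS X Y]
    rw [Ric, hL]
    simp only [map_add, map_sub, map_neg, map_smul, LinearMap.trace_id, trace_smulRight',
      htφ, htφ2, hdim, hηφ, hdαφ, hdβφ2, smul_eq_mul, hηξ]
    push_cast; ring
  have hskew2 : ∀ u v : V, g (φ u) v = - g (φ v) u := by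
    intro u v; rw [hskew, hg_symm]
  have hRXi : ∀ X Z : V, R X ξ Z =
      (α₀^2+β₀^2) • (g Z X • ξ - η Z • X)
      + (2*α₀*β₀) • (g (φ Z) X • ξ + η Z • φ X)
      - dα Z • φ X - g (φ Z) X • A - g (φ (φ Z)) X • B + dβ Z • φ (φ X) := by
    intro X Z
    have key : ∀ W : V, g (R X ξ Z) W =
        g ((α₀^2+β₀^2) • (g Z X • ξ - η Z • X)
        + (2*α₀*β₀) • (g (φ Z) X • ξ + η Z • φ X)
        - dα Z • φ X - g (φ Z) X • A - g (φ (φ Z)) X • B + dβ Z • φ (φ X)) W := by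
      intro W
      have h1 : g (R X ξ Z) W = - g (R Z W ξ) X := by
        rw [hR_pair X ξ Z W, hR_a2 Z W X ξ]
      rw [h1, hTPS Z W]
      simp only [map_add, map_sub, map_neg, map_smul, LinearMap.add_apply,
        LinearMap.sub_apply, LinearMap.neg_apply, LinearMap.smul_apply, smul_eq_mul]
      rw [hg_symm W X, hskew2 W X, hφ2g W X, hφ2g Z X]
      rw [hg_symm W X, hξg W, hA W, hB W, hφ2g X W]
      ring
    have h0 : ∀ W : V, g (R X ξ Z -
        ((α₀^2+β₀^2) • (g Z X • ξ - η Z • X)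
        + (2*α₀*β₀) • (g (φ Z) X • ξ + η Z • φ X)
        - dα Z • φ X - g (φ Z) X • A - g (φ (φ Z)) X • B + dβ Z • φ (φ X))) W = 0 := by
      intro W
      rw [map_sub, LinearMap.sub_apply, key W, sub_self]
    have := hg_nondeg.1 _ h0
    exact sub_eq_zero.mp this
  have hgφZA : ∀ Z : V, g (φ Z) A = (2*(n:ℝ)-1) * dβ Z := by
    intro Z
    rw [hskew, hgrad]
    simp only [map_neg, map_smul, smul_eq_mul, neg_neg]
    rw [hg_symm Z B, hB]
  have hgφ2ZB : ∀ Z : V, g (φ (φ Z)) B = dβ Z := by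
    intro Z
    rw [hφ2g, hg_symm Z B, hB, hηB]
    ring
  have hRicξ : ∀ Z : V, Ric R ξ Z = -(2*(n:ℝ)*(α₀^2+β₀^2)) * η Z := by
    intro Z
    have hL : (LinearMap.applyₗ (R := ℝ) Z).comp (R.flip ξ)
        = (α₀^2+β₀^2) • ((g Z).smulRight ξ - η Z • (LinearMap.id : V →ₗ[ℝ] V))
          + (2*α₀*β₀) • ((g (φ Z)).smulRight ξ + η Z • φ)
          - dα Z • φ - (g (φ Z)).smulRight A - (g (φ (φ Z))).smulRight B
          + dβ Z • (φ ∘ₗ φ) := by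
      ext X
      simp only [LinearMap.coe_comp, Function.comp_apply, LinearMap.flip_apply,
        LinearMap.applyₗ_apply_apply, LinearMap.add_apply, LinearMap.sub_apply,
        LinearMap.smul_apply, LinearMap.smulRight_apply, LinearMap.id_coe, id_eq]
      rw [hRXi X Z]
    rw [Ric, hL]
    simp only [map_add, map_sub, map_smul, LinearMap.trace_id, trace_smulRight',
      htφ, htφ2, hdim, smul_eq_mul, hgξ, hηφ, hgφZA, hgφ2ZB]
    push_cast; ring
  have hQξ : Qop ξ = -(2*(n:ℝ)*(α₀^2+β₀^2)) • ξ := by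
    have h0 : ∀ W : V, g (Qop ξ - -(2*(n:ℝ)*(α₀^2+β₀^2)) • ξ) W = 0 := by
      intro W
      rw [map_sub, LinearMap.sub_apply, hQ, hRicξ, map_smul, LinearMap.smul_apply,
        smul_eq_mul, hξg]
      ring
    exact sub_eq_zero.mp (hg_nondeg.1 _ h0)
  exact ⟨hdβξ, hRic, hQξ⟩
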